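/- arXiv:1205.6824 — 4 statements merged into one kernel-verified Lean document; each statement's English description precedes it below -/
import Mathlib

section
/- Let P and Q be classes of topological spaces, each closed under homeomorphic images, such that every one-element space belongs to P and P ⊆ Q. Then add(Q) ≤ add(P→Q) ≤ non(Q). -/
open Set Filter Cardinal

/-! Basic framework: classes of topological spaces and selection principles. -/

/-- A class (property) of topological spaces. -/
def SpaceClass : Type 1 := (X : Type) → TopologicalSpace X → Prop

/-- The subspace topology on a subset. -/
def subspaceTop {X : Type} (t : TopologicalSpace X) (S : Set X) : TopologicalSpace ↥S :=
  @instTopologicalSpaceSubtype X (· ∈ S) t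

/-- A subset `S` of `X`, viewed as a subspace, belongs to the class `P`. -/
def memSub (P : SpaceClass) {X : Type} (t : TopologicalSpace X) (S : Set X) : Prop :=
  P ↥S (subspaceTop t S)

/-- The product topology, with explicit topologies. -/
def prodTop {X Y : Type} (t : TopologicalSpace X) (s : TopologicalSpace Y) :
    TopologicalSpace (X × Y) :=
  @instTopologicalSpaceProd X Y t s

/-- A countable open cover of `X` (not containing `X` itself as a member). -/
def IsCountableOpenCover {X : Type} [TopologicalSpace X] (𝒰 : Set (Set X)) : Prop :=
  𝒰.Countable ∧ (∀ U ∈ 𝒰, IsOpen U) ∧ ⋃₀ 𝒰 = Set.univ ∧ Set.univ ∉ 𝒰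

/-- The cover `𝒰` contains a finite subcover. -/
def ContainsFinSubcover {X : Type} [TopologicalSpace X] (𝒰 : Set (Set X)) : Prop :=
  ∃ ℱ : Set (Set X), ℱ ⊆ 𝒰 ∧ ℱ.Finite ∧ ⋃₀ ℱ = Set.univ

/-- Rothberger's property `S1(O,O)`. -/
def IsRothberger (X : Type) [TopologicalSpace X] : Prop :=
  ∀ 𝒰 : ℕ → Set (Set X), (∀ n, IsCountableOpenCover (𝒰 n)) →
    ∃ V : ℕ → Set X, (∀ n, V n ∈ 𝒰 n) ∧ ⋃ n, V n = Set.univ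

/-- Hurewicz's property `Ufin(O,Γ)`. -/
def IsHurewicz (X : Type) [TopologicalSpace X] : Prop :=
  ∀ 𝒰 : ℕ → Set (Set X), (∀ n, IsCountableOpenCover (𝒰 n)) →
    (∀ n, ¬ ContainsFinSubcover (𝒰 n)) →
    ∃ ℱ : ℕ → Set (Set X), (∀ n, ℱ n ⊆ 𝒰 n) ∧ (∀ n, (ℱ n).Finite) ∧
      ∀ x : X, ∀ᶠ n in atTop, x ∈ ⋃₀ (ℱ n)

/-- Menger's property `Sfin(O,O)`. -/
def IsMenger (X : Type) [TopologicalSpace X] : Prop :=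
  ∀ 𝒰 : ℕ → Set (Set X), (∀ n, IsCountableOpenCover (𝒰 n)) →
    ∃ ℱ : ℕ → Set (Set X), (∀ n, ℱ n ⊆ 𝒰 n) ∧ (∀ n, (ℱ n).Finite) ∧
      ⋃ n, ⋃₀ (ℱ n) = Set.univ

/-- The Gerlits–Nagy property: Hurewicz and Rothberger. -/
def IsGerlitsNagy (X : Type) [TopologicalSpace X] : Prop :=
  IsHurewicz X ∧ IsRothberger X

/-- A countable open ω-cover: `X` itself is not a member, and every finite subset of `X`
is contained in some member. -/
def IsOmegaCover {X : Type} [TopologicalSpace X] (𝒰 : Set (Set X)) : Prop :=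
  𝒰.Countable ∧ (∀ U ∈ 𝒰, IsOpen U) ∧ Set.univ ∉ 𝒰 ∧
    ∀ F : Set X, F.Finite → ∃ U ∈ 𝒰, F ⊆ U

/-- A γ-cover: an infinite family, not containing `X`, such that every point of `X`
belongs to all but finitely many members. -/
def IsGammaCover {X : Type} [TopologicalSpace X] (𝒰 : Set (Set X)) : Prop :=
  𝒰.Infinite ∧ Set.univ ∉ 𝒰 ∧ ∀ x : X, {U ∈ 𝒰 | x ∉ U}.Finite

/-- The Gerlits–Nagy γ-property `S1(Ω,Γ)`. -/
def SatisfiesS1OmegaGamma (X : Type) [TopologicalSpace X] : Prop :=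
  ∀ 𝒰 : ℕ → Set (Set X), (∀ n, IsOmegaCover (𝒰 n)) →
    ∃ V : ℕ → Set X, (∀ n, V n ∈ 𝒰 n) ∧ IsGammaCover (range V)

/-! Cardinal characteristics of the continuum. -/

/-- `cov(M)`: the least cardinality of a family of meager subsets of `ℝ` covering `ℝ`. -/
noncomputable def covMeager : Cardinal :=
  sInf { c | ∃ 𝒜 : Set (Set ℝ), #𝒜 = c ∧ (∀ A ∈ 𝒜, IsMeagre A) ∧ ⋃₀ 𝒜 = Set.univ }

/-- `add(M)`: the least cardinality of a family of meager subsets of `ℝ` whose union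
is not meager. -/
noncomputable def addMeager : Cardinal :=
  sInf { c | ∃ 𝒜 : Set (Set ℝ), #𝒜 = c ∧ (∀ A ∈ 𝒜, IsMeagre A) ∧ ¬ IsMeagre (⋃₀ 𝒜) }

/-- `add(N)`: the least cardinality of a family of Lebesgue-null subsets of `ℝ` whose union
is not Lebesgue-null. -/
noncomputable def addNull : Cardinal :=
  sInf { c | ∃ 𝒜 : Set (Set ℝ), #𝒜 = c ∧ (∀ A ∈ 𝒜, MeasureTheory.volume A = 0) ∧
    MeasureTheory.volume (⋃₀ 𝒜) ≠ 0 }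

/-- The dominating number `𝔡`. -/
noncomputable def frakd : Cardinal :=
  sInf { c | ∃ D : Set (ℕ → ℕ), #D = c ∧
    ∀ g : ℕ → ℕ, ∃ f ∈ D, ∀ᶠ n in atTop, g n ≤ f n }

/-- The unbounding number `𝔟`. -/
noncomputable def frakb : Cardinal :=
  sInf { c | ∃ B : Set (ℕ → ℕ), #B = c ∧
    ∀ g : ℕ → ℕ, ∃ f ∈ B, ¬ (∀ᶠ n in atTop, f n ≤ g n) }

/-- A groupwise dense family: a family of infinite subsets of `ℕ`, closed under infinite
subsets, such that for every increasing `h` there is an infinite `I ⊆ ℕ` with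
`⋃ n ∈ I, [h n, h (n+1)) ` in the family. -/
def IsGroupwiseDense (G : Set (Set ℕ)) : Prop :=
  (∀ A ∈ G, A.Infinite) ∧ (∀ A ∈ G, ∀ B, B ⊆ A → B.Infinite → B ∈ G) ∧
  ∀ h : ℕ → ℕ, StrictMono h →
    ∃ I : Set ℕ, I.Infinite ∧ (⋃ n ∈ I, Ico (h n) (h (n + 1))) ∈ G

/-- The groupwise density number `𝔤`. -/
noncomputable def frakg : Cardinal :=
  sInf { c | ∃ 𝒢 : Set (Set (Set ℕ)), #𝒢 = c ∧ (∀ G ∈ 𝒢, IsGroupwiseDense G) ∧ ⋂₀ 𝒢 = ∅ }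

/-! Class operations: additivity, uniformity, productive classes. -/

def RothbergerClass : SpaceClass := fun X t => @IsRothberger X t
def HurewiczClass : SpaceClass := fun X t => @IsHurewicz X t
def MengerClass : SpaceClass := fun X t => @IsMenger X t
def GNClass : SpaceClass := fun X t => @IsGerlitsNagy X t
def GammaPropClass : SpaceClass := fun X t => @SatisfiesS1OmegaGamma X t

/-- `add(P,Q)`: the least cardinal `κ` such that some topological space is the union of
`κ` subspaces, each in `P`, while the union fails `Q`. -/
noncomputable def classAdd (P Q : SpaceClass) : Cardinal :=
  sInf { c | ∃ (X : Type) (t : TopologicalSpace X) (𝒮 : Set (Set X)),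
    #𝒮 = c ∧ ⋃₀ 𝒮 = Set.univ ∧ (∀ S ∈ 𝒮, memSub P t S) ∧ ¬ Q X t }

/-- `non(Q)`: the least cardinality of a space not in `Q`. -/
noncomputable def classNon (Q : SpaceClass) : Cardinal :=
  sInf { c | ∃ (X : Type) (t : TopologicalSpace X), #X = c ∧ ¬ Q X t }

/-- The class `P → Q` of spaces whose product with every member of `P` is in `Q`. -/
def ProductiveClass (P Q : SpaceClass) : SpaceClass := fun X t =>
  ∀ (Y : Type) (s : TopologicalSpace Y), P Y s → Q (X × Y) (prodTop t s)

/-- The class `P` is closed under homeomorphic images. -/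
def ClosedUnderHomeo (P : SpaceClass) : Prop :=
  ∀ (X Y : Type) (t : TopologicalSpace X) (s : TopologicalSpace Y),
    Nonempty (@Homeomorph X Y t s) → P X t → P Y s

/-- Every one-element space belongs to `P`. -/
def ContainsSingletons (P : SpaceClass) : Prop :=
  ∀ (X : Type) (t : TopologicalSpace X), (∃ x : X, ∀ y : X, y = x) → P X t

/-! Concentrated spaces and related hierarchies. -/

/-- A space is `λ`-concentrated if there is a countable `D ⊆ X` such that
`|X \ U| < λ` for every open `U ⊇ D`. -/
def IsLambdaConcentrated (lam : Cardinal) (X : Type) [TopologicalSpace X] : Prop :=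
  ∃ D : Set X, D.Countable ∧ ∀ U : Set X, IsOpen U → D ⊆ U → #↥(Uᶜ) < lam

/-- The space `X` is a union of fewer than `λ` compact subspaces (the class `K_λ`). -/
def IsKUnion (lam : Cardinal) (X : Type) [TopologicalSpace X] : Prop :=
  ∃ 𝒮 : Set (Set X), #𝒮 < lam ∧ (∀ S ∈ 𝒮, IsCompact S) ∧ ⋃₀ 𝒮 = Set.univ

/-- A σ-compact subset: a countable union of compact sets. -/
def IsSigmaCompactSet {X : Type} [TopologicalSpace X] (D : Set X) : Prop :=
  ∃ f : ℕ → Set X, (∀ n, IsCompact (f n)) ∧ D = ⋃ n, f n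

/-- A space is `K_λ`-concentrated if there is a σ-compact `D ⊆ X` such that
`X \ U ∈ K_λ` for every open `U ⊇ D`. -/
def IsKConcentrated (lam : Cardinal) (X : Type) [TopologicalSpace X] : Prop :=
  ∃ D : Set X, IsSigmaCompactSet D ∧ ∀ U : Set X, IsOpen U → D ⊆ U →
    IsKUnion lam ↥(Uᶜ)

/-- Successor step of the hierarchy `C_α(κ)`. -/
def CHierStep (kappa : Cardinal) (P : SpaceClass) : SpaceClass := fun X t =>
  @RegularSpace X t ∧
    ((∃ D : Set X, D.Countable ∧ ∀ U : Set X, @IsOpen X t U → D ⊆ U → memSub P t Uᶜ) ∨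
     (∃ 𝒮 : Set (Set X), #𝒮 < kappa.ord.cof ∧ ⋃₀ 𝒮 = Set.univ ∧ ∀ S ∈ 𝒮, memSub P t S))

/-- The hierarchy `C_α(κ)`: `C_0(κ)` is the class of regular spaces of cardinality `< κ`;
`C_{α+1}(κ)` consists of the regular spaces `C` such that either there is a countable
`D ⊆ C` with `C \ U ∈ C_α(κ)` for every open `U ⊇ D`, or `C` is a union of fewer than
`cf(κ)` members of `C_α(κ)`; at limits we take unions. -/
noncomputable def CHier (kappa : Cardinal) (α : Ordinal) : SpaceClass :=
  Ordinal.limitRecOn α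
    (fun X t => @RegularSpace X t ∧ #X < kappa)
    (fun _ P => CHierStep kappa P)
    (fun o _ ih => fun X t => ∃ β, ∃ h : β < o, ih β h X t)

/-- Successor step of the hierarchy `K_α(κ)`. -/
def KHierStep (kappa : Cardinal) (P : SpaceClass) : SpaceClass := fun X t =>
  @RegularSpace X t ∧
    ((∃ D : Set X, @IsSigmaCompactSet X t D ∧
        ∀ U : Set X, @IsOpen X t U → D ⊆ U → memSub P t Uᶜ) ∨
     (∃ 𝒮 : Set (Set X), #𝒮 < kappa.ord.cof ∧ ⋃₀ 𝒮 = Set.univ ∧ ∀ S ∈ 𝒮, memSub P t S))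

/-- The hierarchy `K_α(κ)`: `K_0(κ)` is the class of regular spaces that are unions of
fewer than `κ` compact subspaces; `K_{α+1}(κ)` consists of the regular spaces `C` such
that either there is a σ-compact `D ⊆ C` with `C \ U ∈ K_α(κ)` for every open `U ⊇ D`,
or `C` is a union of fewer than `cf(κ)` members of `K_α(κ)`; at limits we take unions. -/
noncomputable def KHier (kappa : Cardinal) (α : Ordinal) : SpaceClass :=
  Ordinal.limitRecOn α
    (fun X t => @RegularSpace X t ∧ @IsKUnion kappa X t)
    (fun _ P => KHierStep kappa P)
    (fun o _ ih => fun X t => ∃ β, ∃ h : β < o, ih β h X t)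

/-- The space embeds in a compact Hausdorff space. -/
def EmbedsInCompactHausdorff (X : Type) [TopologicalSpace X] : Prop :=
  ∃ (K : Type) (tK : TopologicalSpace K), @CompactSpace K tK ∧ @T2Space K tK ∧
    ∃ e : X → K, @Topology.IsEmbedding X K _ tK e

/-- Tychonoff space: completely regular and T1. -/
def IsTychonoff (X : Type) [TopologicalSpace X] : Prop :=
  T1Space X ∧ CompletelyRegularSpace X

/-! Auxiliary lemmas for the main theorem. -/

/-- A singleton subspace belongs to `P → Q`. -/
lemma memSub_productive_singleton {P Q : SpaceClass}
    (hQ : ClosedUnderHomeo Q)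
    (hPQ : ∀ (X : Type) (t : TopologicalSpace X), P X t → Q X t)
    {X : Type} (t : TopologicalSpace X) (z : X) :
    memSub (ProductiveClass P Q) t {z} := by
  intro Y s hY
  letI := t; letI := s
  refine hQ Y (↥({z} : Set X) × Y) s (prodTop (subspaceTop t {z}) s) ⟨?_⟩ (hPQ Y s hY)
  exact
    { toFun := fun y => (⟨z, rfl⟩, y)
      invFun := Prod.snd
      left_inv := fun y => rfl
      right_inv := fun p => by
        obtain ⟨⟨a, ha⟩, y⟩ := p
        simp only [Set.mem_singleton_iff] at ha
        subst ha; rfl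
      continuous_toFun := Continuous.prodMk continuous_const continuous_id
      continuous_invFun := continuous_snd }

/-- A space failing `Q` fails `P → Q`. -/
lemma not_productive_of_not {P Q : SpaceClass}
    (hQ : ClosedUnderHomeo Q) (hone : ContainsSingletons P)
    {X : Type} (t : TopologicalSpace X) (hx : ¬ Q X t) :
    ¬ ProductiveClass P Q X t := by
  intro hR
  letI := t
  have hp : P PUnit inferInstance := hone PUnit _ ⟨PUnit.unit, fun y => rfl⟩
  have hq := hR PUnit inferInstance hp
  exact hx (hQ (X × PUnit) X (prodTop t inferInstance) t ⟨Homeomorph.prodPUnit X⟩ hq)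

/-- If `X` fails `P → Q`, its cardinality lies in the additivity set of `P → Q`
(via the singleton cover). -/
lemma mk_mem_addSet_of_not_productive {P Q : SpaceClass}
    (hQ : ClosedUnderHomeo Q)
    (hPQ : ∀ (X : Type) (t : TopologicalSpace X), P X t → Q X t)
    {X : Type} (t : TopologicalSpace X) (hx : ¬ ProductiveClass P Q X t) :
    (#X) ∈ { c | ∃ (Z : Type) (tz : TopologicalSpace Z) (𝒮 : Set (Set Z)),
      #𝒮 = c ∧ ⋃₀ 𝒮 = Set.univ ∧ (∀ S ∈ 𝒮, memSub (ProductiveClass P Q) tz S) ∧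
      ¬ ProductiveClass P Q Z tz } := by
  refine ⟨X, t, Set.range (fun x : X => ({x} : Set X)), ?_, ?_, ?_, hx⟩
  · exact Cardinal.mk_range_eq _ Set.singleton_injective
  · ext x
    simp only [Set.mem_sUnion, Set.mem_range, Set.mem_univ, iff_true]
    exact ⟨{x}, ⟨x, rfl⟩, rfl⟩
  · rintro S ⟨z, rfl⟩
    exact memSub_productive_singleton hQ hPQ t z

/-- For classes `P, Q` closed under homeomorphic images, with every one-element space in `P`
and `P ⊆ Q`: `add(Q) ≤ add(P→Q) ≤ non(Q)`. -/
theorem classAdd_le_classAdd_productive (P Q : SpaceClass)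
    (hP : ClosedUnderHomeo P) (hQ : ClosedUnderHomeo Q) (hone : ContainsSingletons P)
    (hPQ : ∀ (X : Type) (t : TopologicalSpace X), P X t → Q X t) :
    classAdd Q Q ≤ classAdd (ProductiveClass P Q) (ProductiveClass P Q) ∧
      classAdd (ProductiveClass P Q) (ProductiveClass P Q) ≤ classNon Q := by
  classical
  set R : SpaceClass := ProductiveClass P Q with hR
  set SR : Set Cardinal := { c | ∃ (Z : Type) (tz : TopologicalSpace Z) (𝒮 : Set (Set Z)),
    #𝒮 = c ∧ ⋃₀ 𝒮 = Set.univ ∧ (∀ S ∈ 𝒮, memSub R tz S) ∧ ¬ R Z tz } with hSR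
  set SQ : Set Cardinal := { c | ∃ (Z : Type) (tz : TopologicalSpace Z) (𝒮 : Set (Set Z)),
    #𝒮 = c ∧ ⋃₀ 𝒮 = Set.univ ∧ (∀ S ∈ 𝒮, memSub Q tz S) ∧ ¬ Q Z tz } with hSQ
  have haddQ : classAdd Q Q = sInf SQ := rfl
  have haddR : classAdd R R = sInf SR := rfl
  -- every cardinal in SR dominates classAdd Q Q
  have key1 : ∀ c ∈ SR, classAdd Q Q ≤ c := by
    rintro c ⟨X, t, 𝒮, hcard, hcov, hsub, hnR⟩
    have : ∃ (Y : Type) (s : TopologicalSpace Y), P Y s ∧ ¬ Q (X × Y) (prodTop t s) := by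
      by_contra h
      push_neg at h
      exact hnR fun Y s hY => h Y s hY
    obtain ⟨Y, s, hY, hnq⟩ := this
    letI := t; letI := s
    set 𝒮' : Set (Set (X × Y)) := (fun S : Set X => S ×ˢ (Set.univ : Set Y)) '' 𝒮 with h𝒮'
    have hmem : #𝒮' ∈ SQ := by
      refine ⟨X × Y, prodTop t s, 𝒮', rfl, ?_, ?_, hnq⟩
      · ext ⟨x, y⟩
        simp only [Set.mem_sUnion, Set.mem_univ, iff_true, h𝒮', Set.mem_image]
        have hx : x ∈ ⋃₀ 𝒮 := hcov ▸ Set.mem_univ x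
        obtain ⟨S, hS, hxS⟩ := hx
        exact ⟨S ×ˢ Set.univ, ⟨S, hS, rfl⟩, hxS, Set.mem_univ y⟩
      · rintro _ ⟨S, hS, rfl⟩
        have hq : Q (↥S × Y) (prodTop (subspaceTop t S) s) := hsub S hS Y s hY
        refine hQ (↥S × Y) ↥(S ×ˢ (Set.univ : Set Y))
          (prodTop (subspaceTop t S) s) (subspaceTop (prodTop t s) (S ×ˢ Set.univ))
          ⟨?_⟩ hq
        exact ((Homeomorph.Set.prod S Set.univ).trans
          ((Homeomorph.refl ↥S).prodCongr (Homeomorph.Set.univ Y))).symm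
    calc classAdd Q Q ≤ #𝒮' := csInf_le' hmem
      _ ≤ #𝒮 := Cardinal.mk_image_le
      _ = c := hcard
  constructor
  · rcases SR.eq_empty_or_nonempty with he | hne
    · -- SR empty forces SQ empty
      have hSQe : SQ = ∅ := by
        rw [Set.eq_empty_iff_forall_notMem]
        rintro c ⟨X, t, 𝒮, hcard, hcov, hsub, hnq⟩
        have hnR : ¬ R X t := not_productive_of_not hQ hone t hnq
        have : (#X) ∈ SR := mk_mem_addSet_of_not_productive hQ hPQ t hnR
        rw [he] at this
        exact this
      rw [haddQ, haddR, he, hSQe]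
    · have := csInf_mem hne
      exact haddR ▸ key1 _ this
  · set N : Set Cardinal := { c | ∃ (Z : Type) (tz : TopologicalSpace Z), #Z = c ∧ ¬ Q Z tz }
      with hN
    have hnon : classNon Q = sInf N := rfl
    rcases N.eq_empty_or_nonempty with he | hne
    · -- every space is in Q, so SR is empty
      have hall : ∀ (Z : Type) (tz : TopologicalSpace Z), Q Z tz := by
        intro Z tz
        by_contra h
        have : (#Z) ∈ N := ⟨Z, tz, rfl, h⟩
        rw [he] at this
        exact this
      have hSRe : SR = ∅ := by
        rw [Set.eq_empty_iff_forall_notMem]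
        rintro c ⟨X, t, 𝒮, hcard, hcov, hsub, hnR⟩
        exact hnR fun Y s hY => hall (X × Y) (prodTop t s)
      have h0 : classAdd R R = 0 := by
        rw [haddR, hSRe, Cardinal.sInf_empty]
      exact h0.le.trans zero_le
    · obtain ⟨X, t, hcard, hnq⟩ := csInf_mem hne
      have hnR : ¬ R X t := not_productive_of_not hQ hone t hnq
      have hm : (#X) ∈ SR := mk_mem_addSet_of_not_productive hQ hPQ t hnR
      rw [haddR, hnon, ← hcard]
      exact csInf_le' hm
end

section
/- add(Ufin(O,Γ), Sfin(O,O)) = 𝔡: the least cardinal κ such that some topological space is the union of κ subspaces, each having the Hurewicz property, while the union itself fails Menger's property, is exactly the dominating number 𝔡. -/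
open Set Filter Cardinal

section Aux

lemma subspaceTop_eq {X : Type} (t : TopologicalSpace X) (S : Set X) :
    subspaceTop t S = @instTopologicalSpaceSubtype X (· ∈ S) t := rfl

/-- Compact subspaces are Hurewicz (vacuously: every countable open cover of a
compact space contains a finite subcover). -/
lemma isHurewicz_of_isCompact {X : Type} [t : TopologicalSpace X] {S : Set X}
    (hS : IsCompact S) : memSub HurewiczClass t S := by
  intro 𝒰 hcov hnofin
  exfalso
  apply hnofin 0
  have hCS : @CompactSpace ↥S (subspaceTop t S) := isCompact_iff_compactSpace.mp hS
  have hsU : (Set.univ : Set ↥S) ⊆ ⋃ (V : ↥(𝒰 0)), (V : Set ↥S) := by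
    rw [← Set.sUnion_eq_iUnion, (hcov 0).2.2.1]
  obtain ⟨T, hT⟩ := isCompact_univ.elim_finite_subcover (fun V : ↥(𝒰 0) => (V : Set ↥S))
    (fun V => (hcov 0).2.1 V V.2) hsU
  refine ⟨Subtype.val '' (T : Set ↥(𝒰 0)), Subtype.coe_image_subset _ _,
    T.finite_toSet.image _, ?_⟩
  apply Set.eq_univ_of_univ_subset
  intro x hx
  obtain ⟨V, hVT, hxV⟩ := Set.mem_iUnion₂.mp (hT hx)
  exact ⟨V, ⟨V, hVT, rfl⟩, hxV⟩

/-- There is a dominating family of size `frakd`. -/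
lemma exists_dominating :
    ∃ D : Set (ℕ → ℕ), #D = frakd ∧ ∀ g : ℕ → ℕ, ∃ f ∈ D, ∀ᶠ n in atTop, g n ≤ f n := by
  have hne : { c | ∃ D : Set (ℕ → ℕ), #D = c ∧
      ∀ g : ℕ → ℕ, ∃ f ∈ D, ∀ᶠ n in atTop, g n ≤ f n }.Nonempty :=
    ⟨#(Set.univ : Set (ℕ → ℕ)), Set.univ, rfl,
      fun g => ⟨g, Set.mem_univ g, Eventually.of_forall fun n => le_rfl⟩⟩
  exact csInf_mem hne

lemma aleph0_le_frakd : ℵ₀ ≤ frakd := by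
  by_contra h
  push_neg at h
  obtain ⟨D, hDc, hDdom⟩ := exists_dominating
  have hfin : D.Finite := Cardinal.lt_aleph0_iff_set_finite.mp (hDc ▸ h)
  obtain ⟨f, hfD, hev⟩ := hDdom (fun n => (hfin.toFinset.sup fun f => f n) + 1)
  obtain ⟨n, hn⟩ := hev.exists
  have hn' : (hfin.toFinset.sup fun f => f n) + 1 ≤ f n := hn
  have hle : f n ≤ hfin.toFinset.sup fun f => f n :=
    Finset.le_sup (f := fun f => f n) (hfin.mem_toFinset.mpr hfD)
  exact Nat.not_succ_le_self _ (hn'.trans hle)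

/-- The Baire space `ℕ → ℕ` is not Menger. -/
lemma not_isMenger_baire : ¬ IsMenger (ℕ → ℕ) := by
  intro hM
  set C : ℕ → ℕ → Set (ℕ → ℕ) := fun n k => {g | g n ≤ k} with hC
  have hCopen : ∀ n k, IsOpen (C n k) := by
    intro n k
    have : C n k = (fun g : ℕ → ℕ => g n) ⁻¹' (Set.Iic k) := rfl
    rw [this]; exact (isOpen_discrete _).preimage (continuous_apply n)
  have hCinj : ∀ n, Function.Injective (C n) := by
    intro n a b hab
    have h1 : (fun _ => a) ∈ C n a := by simp [hC]
    have h2 : (fun _ => b) ∈ C n b := by simp [hC]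
    rw [hab] at h1; rw [← hab] at h2
    exact le_antisymm h1 h2
  have hcov : ∀ n, IsCountableOpenCover (Set.range (C n)) := by
    intro n
    refine ⟨Set.countable_range _, ?_, ?_, ?_⟩
    · rintro V ⟨k, rfl⟩; exact hCopen n k
    · apply Set.eq_univ_of_univ_subset
      intro g _
      exact ⟨C n (g n), ⟨g n, rfl⟩, by simp [hC]⟩
    · rintro ⟨k, hk⟩
      have : (fun _ => k + 1) ∈ C n k := by rw [hk]; trivial
      simp [hC] at this
  obtain ⟨ℱ, hsub, hfin, hcover⟩ := hM (fun n => Set.range (C n)) hcov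
  set K : ℕ → Set ℕ := fun n => C n ⁻¹' (ℱ n) with hK
  have hKfin : ∀ n, (K n).Finite := fun n => (hfin n).preimage ((hCinj n).injOn)
  set g : ℕ → ℕ := fun n => sSup (K n) + 1 with hg
  have : g ∈ ⋃ n, ⋃₀ (ℱ n) := by rw [hcover]; trivial
  obtain ⟨_, ⟨n, rfl⟩, V, hVF, hgV⟩ := this
  obtain ⟨k, rfl⟩ := hsub n hVF
  have hkK : k ∈ K n := hVF
  have hle : k ≤ sSup (K n) := le_csSup (hKfin n).bddAbove hkK
  have hgk : g n ≤ k := hgV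
  simp only [hg] at hgk
  omega

end Aux


/-- Key lemma: from a Hurewicz subspace `S` and a sequence of "enumerated" open covers
of `X`, extract a function `f` such that every `x ∈ S` eventually lies in the union of
the first `f n` members of the `n`-th cover. -/
lemma key_fun {X : Type} {t : TopologicalSpace X} (U : ℕ → ℕ → Set X)
    (hUopen : ∀ n j, IsOpen (U n j)) (hUcover : ∀ n, (⋃ j, U n j) = Set.univ)
    (S : Set X) (hS : memSub HurewiczClass t S) :
    ∃ f : ℕ → ℕ, ∀ x ∈ S, ∀ᶠ n in atTop, x ∈ ⋃ j ∈ Set.Iic (f n), U n j := by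
  classical
  set W : ℕ → ℕ → Set X := fun n k => ⋃ j ∈ Set.Iic k, U n j with hW
  have hWopen : ∀ n k, IsOpen (W n k) := fun n k => isOpen_biUnion fun j _ => hUopen n j
  have hWmono : ∀ n, Monotone (W n) := by
    intro n k k' hkk'
    exact Set.biUnion_mono (fun j hj => le_trans hj hkk') fun _ _ => subset_rfl
  have hWcover : ∀ n, (⋃ k, W n k) = Set.univ := by
    intro n
    apply Set.eq_univ_of_univ_subset
    rw [← hUcover n]
    exact Set.iUnion_mono fun j => Set.subset_biUnion_of_mem (Set.mem_Iic.mpr le_rfl)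
  set B : ℕ → Prop := fun n => ∃ k, S ⊆ W n k with hB
  by_cases hBfin : {n | ¬ B n}.Finite
  · refine ⟨fun n => if h : B n then h.choose else 0, ?_⟩
    intro x hx
    have hevB : ∀ᶠ n in cofinite, B n := by
      rw [eventually_cofinite]
      simpa using hBfin
    rw [← Nat.cofinite_eq_atTop]
    filter_upwards [hevB] with n hBn
    simp only [dif_pos hBn]
    exact hBn.choose_spec hx
  · -- infinitely many `n` admit no finite "initial-segment" cover of `S`
    letI tS : TopologicalSpace ↥S := subspaceTop t S
    set p : ℕ → Prop := fun n => ¬ B n with hp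
    have hpinf : (setOf p).Infinite := hBfin
    set e : ℕ → ℕ := Nat.nth p with he
    have he_mem : ∀ i, ¬ B (e i) := fun i => Nat.nth_mem_of_infinite hpinf i
    have he_mono : StrictMono e := Nat.nth_strictMono hpinf
    have he_range : ∀ n, ¬ B n → ∃ i, e i = n := by
      intro n hn
      have hmem : n ∈ Set.range e := by
        rw [he, Nat.range_nth_of_infinite hpinf]
        exact hn
      exact hmem
    set V : ℕ → ℕ → Set ↥S := fun n k => (Subtype.val) ⁻¹' (W n k) with hV
    have hVopen : ∀ n k, IsOpen (V n k) :=
      fun n k => (hWopen n k).preimage continuous_subtype_val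
    set kOf : ℕ → Set ↥S → ℕ :=
      fun n A => if h : ∃ k, A = V n k then h.choose else 0 with hkOf
    have hbound : ∀ n (F : Set (Set ↥S)), F.Finite → (∀ A ∈ F, ∃ k, A = V n k) →
        ∃ m, ⋃₀ F ⊆ V n m := by
      intro n F hF hFk
      refine ⟨hF.toFinset.sup (kOf n), ?_⟩
      rintro x ⟨A, hA, hxA⟩
      have h1 : ∃ k, A = V n k := hFk A hA
      have h2 : A = V n (kOf n A) := by
        simp only [hkOf, dif_pos h1]
        exact h1.choose_spec
      have h3 : kOf n A ≤ hF.toFinset.sup (kOf n) := Finset.le_sup (hF.mem_toFinset.mpr hA)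
      rw [h2] at hxA
      exact Set.preimage_mono (hWmono n h3) hxA
    have hsubW : ∀ n m, V n m = Set.univ → S ⊆ W n m := by
      intro n m h x hx
      have : (⟨x, hx⟩ : ↥S) ∈ V n m := by rw [h]; trivial
      exact this
    set 𝒱 : ℕ → Set (Set ↥S) := fun i => Set.range (V (e i)) with h𝒱
    have hcov : ∀ i, IsCountableOpenCover (𝒱 i) := by
      intro i
      refine ⟨Set.countable_range _, ?_, ?_, ?_⟩
      · rintro A ⟨k, rfl⟩; exact hVopen (e i) k
      · rw [Set.sUnion_range]
        have h1 : ⋃ k, V (e i) k = (Subtype.val : ↥S → X) ⁻¹' (⋃ k, W (e i) k) := by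
          rw [Set.preimage_iUnion]
        rw [h1, hWcover]
        simp
      · rintro ⟨k, hk⟩
        exact he_mem i ⟨k, hsubW (e i) k hk⟩
    have hnofin : ∀ i, ¬ ContainsFinSubcover (𝒱 i) := by
      rintro i ⟨F, hFsub, hFfin, hFcov⟩
      obtain ⟨m, hm⟩ := hbound (e i) F hFfin (fun A hA => by
        obtain ⟨k, hk⟩ := hFsub hA; exact ⟨k, hk.symm⟩)
      apply he_mem i
      refine ⟨m, hsubW (e i) m ?_⟩
      apply Set.eq_univ_of_univ_subset
      rw [← hFcov]
      exact hm
    obtain ⟨F, hFsub, hFfin, hFev⟩ := hS 𝒱 hcov hnofin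
    have hFm : ∀ i, ∃ m, ⋃₀ (F i) ⊆ V (e i) m := fun i =>
      hbound (e i) (F i) (hFfin i) (fun A hA => by
        obtain ⟨k, hk⟩ := hFsub i hA; exact ⟨k, hk.symm⟩)
    choose m hm using hFm
    refine ⟨fun n => if h : B n then h.choose else
      (if h2 : ∃ i, e i = n then m h2.choose else 0), ?_⟩
    intro x hx
    obtain ⟨I, hI⟩ := eventually_atTop.mp (hFev ⟨x, hx⟩)
    rw [eventually_atTop]
    refine ⟨e I + 1, fun n hn => ?_⟩
    by_cases hBn : B n
    · simp only [dif_pos hBn]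
      exact hBn.choose_spec hx
    · have h2 : ∃ i, e i = n := he_range n hBn
      simp only [dif_neg hBn, dif_pos h2]
      have hei : e h2.choose = n := h2.choose_spec
      have hiI : I ≤ h2.choose := by
        by_contra hlt
        push_neg at hlt
        have := he_mono hlt
        omega
      have hx1 : (⟨x, hx⟩ : ↥S) ∈ ⋃₀ F h2.choose := hI _ hiI
      have hx2 := hm h2.choose hx1
      rw [hei] at hx2
      exact hx2

/-- A union of fewer than `𝔡` Hurewicz subspaces is Menger. -/
lemma isMenger_of_sUnion {X : Type} {t : TopologicalSpace X} (𝒮 : Set (Set X))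
    (hcard : #𝒮 < frakd) (hcover : ⋃₀ 𝒮 = Set.univ)
    (hH : ∀ S ∈ 𝒮, memSub HurewiczClass t S) : @IsMenger X t := by
  classical
  intro 𝒰 h𝒰
  by_cases hX : Nonempty X
  · have hne : ∀ n, (𝒰 n).Nonempty := by
      intro n
      rcases Set.eq_empty_or_nonempty (𝒰 n) with h | h
      · exfalso
        have h1 := (h𝒰 n).2.2.1
        rw [h, Set.sUnion_empty] at h1
        obtain ⟨x⟩ := hX
        exact absurd (h1 ▸ Set.mem_univ x) (Set.notMem_empty x)
      · exact h
    have hUex : ∀ n, ∃ f : ℕ → Set X, 𝒰 n = Set.range f :=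
      fun n => (h𝒰 n).1.exists_eq_range (hne n)
    choose U hU using hUex
    have hUopen : ∀ n j, IsOpen (U n j) :=
      fun n j => (h𝒰 n).2.1 _ (by rw [hU n]; exact Set.mem_range_self j)
    have hUcover : ∀ n, (⋃ j, U n j) = Set.univ := by
      intro n
      rw [← Set.sUnion_range, ← hU n]
      exact (h𝒰 n).2.2.1
    have key : ∀ S ∈ 𝒮, ∃ f : ℕ → ℕ,
        ∀ x ∈ S, ∀ᶠ n in atTop, x ∈ ⋃ j ∈ Set.Iic (f n), U n j :=
      fun S hS => key_fun U hUopen hUcover S (hH S hS)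
    choose! fS hfS using key
    have hFcard : #(fS '' 𝒮) < frakd := lt_of_le_of_lt Cardinal.mk_image_le hcard
    have hnotdom : ∃ g : ℕ → ℕ, ∀ f ∈ fS '' 𝒮, ¬ ∀ᶠ n in atTop, g n ≤ f n := by
      by_contra h
      push_neg at h
      have hmem : #(fS '' 𝒮) ∈ { c | ∃ D : Set (ℕ → ℕ), #D = c ∧
          ∀ g : ℕ → ℕ, ∃ f ∈ D, ∀ᶠ n in atTop, g n ≤ f n } := ⟨fS '' 𝒮, rfl, h⟩
      exact absurd (csInf_le' hmem) (not_le.mpr hFcard)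
    obtain ⟨g, hg⟩ := hnotdom
    refine ⟨fun n => (fun j => U n j) '' (Set.Iic (g n)), ?_, ?_, ?_⟩
    · intro n V hV
      obtain ⟨j, _, rfl⟩ := hV
      rw [hU n]
      exact Set.mem_range_self j
    · intro n
      exact (Set.finite_Iic (g n)).image _
    · rw [Set.eq_univ_iff_forall]
      intro x
      have hx : x ∈ ⋃₀ 𝒮 := by rw [hcover]; trivial
      obtain ⟨S, hS, hxS⟩ := hx
      have hfreq : ∃ᶠ n in atTop, ¬ g n ≤ fS S n :=
        Filter.not_eventually.mp (hg (fS S) (Set.mem_image_of_mem _ hS))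
      obtain ⟨n, hn1, hn2⟩ := (hfreq.and_eventually (hfS S hS x hxS)).exists
      obtain ⟨j, hj, hxj⟩ := Set.mem_iUnion₂.mp hn2
      refine Set.mem_iUnion.mpr ⟨n, U n j, ⟨j, ?_, rfl⟩, hxj⟩
      exact le_trans hj (le_of_lt (not_le.mp hn1))
  · refine ⟨fun _ => ∅, fun n => Set.empty_subset _, fun n => Set.finite_empty, ?_⟩
    have huniv : (Set.univ : Set X) = ∅ := by
      rw [Set.univ_eq_empty_iff]
      exact not_nonempty_iff.mp hX
    simp [huniv]

/-- add(Ufin(O,Γ), Sfin(O,O)) = 𝔡. -/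
theorem addHurewicz_Menger_eq_frakd :
    classAdd HurewiczClass MengerClass = frakd := by
  classical
  obtain ⟨D, hDcard, hDdom⟩ := exists_dominating
  -- the witnessing family of compact (hence Hurewicz) subspaces of Baire space
  set 𝒮 : Set (Set (ℕ → ℕ)) :=
    Set.range (fun q : ↥D × ℕ => {g : ℕ → ℕ | ∀ n, g n ≤ max (q.1.1 n) q.2}) with h𝒮
  have h𝒮card : #𝒮 ≤ frakd := by
    refine le_trans Cardinal.mk_range_le ?_
    have h1 : #(↥D × ℕ) = #↥D * #ℕ := by
      rw [Cardinal.mk_prod, Cardinal.lift_id, Cardinal.lift_id]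
    rw [h1, Cardinal.mk_nat, hDcard]
    exact le_of_eq (Cardinal.mul_eq_left aleph0_le_frakd aleph0_le_frakd Cardinal.aleph0_ne_zero)
  have h𝒮cover : ⋃₀ 𝒮 = Set.univ := by
    rw [Set.eq_univ_iff_forall]
    intro g
    obtain ⟨f, hfD, hev⟩ := hDdom g
    obtain ⟨M, hM⟩ := eventually_atTop.mp hev
    refine ⟨{h : ℕ → ℕ | ∀ n, h n ≤ max (f n) ((Finset.range M).sup g)},
      ⟨(⟨f, hfD⟩, (Finset.range M).sup g), rfl⟩, ?_⟩
    intro n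
    rcases le_or_gt M n with h | h
    · exact le_max_of_le_left (hM n h)
    · exact le_max_of_le_right (Finset.le_sup (Finset.mem_range.mpr h))
  have h𝒮H : ∀ S ∈ 𝒮, memSub HurewiczClass Pi.topologicalSpace S := by
    rintro S ⟨q, rfl⟩
    apply isHurewicz_of_isCompact
    show IsCompact {g : ℕ → ℕ | ∀ n, g n ≤ max (q.1.1 n) q.2}
    have h1 : {g : ℕ → ℕ | ∀ n, g n ≤ max (q.1.1 n) q.2} =
        Set.pi Set.univ (fun n => Set.Iic (max (q.1.1 n) q.2)) := by
      ext g
      simp only [Set.mem_setOf_eq, Set.mem_pi, Set.mem_univ, Set.mem_Iic, forall_const]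
    rw [h1]
    exact isCompact_univ_pi fun n => (Set.finite_Iic _).isCompact
  have hmem : #𝒮 ∈ { c | ∃ (X : Type) (t : TopologicalSpace X) (𝒯 : Set (Set X)),
      #𝒯 = c ∧ ⋃₀ 𝒯 = Set.univ ∧ (∀ S ∈ 𝒯, memSub HurewiczClass t S) ∧
      ¬ MengerClass X t } :=
    ⟨ℕ → ℕ, Pi.topologicalSpace, 𝒮, rfl, h𝒮cover, h𝒮H, not_isMenger_baire⟩
  apply le_antisymm
  · exact le_trans (csInf_le' hmem) h𝒮card
  · refine le_csInf ⟨#𝒮, hmem⟩ ?_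
    rintro c ⟨X, t, 𝒯, hc, hcov, hH, hnM⟩
    by_contra hlt
    push_neg at hlt
    exact hnM (isMenger_of_sUnion 𝒯 (hc ▸ hlt) hcov hH)
end

section
/- Every space that is a union of fewer than 𝔡 compact subspaces belongs to Ufin(O,Γ)→Sfin(O,O): if X is a union of fewer than 𝔡 compact subspaces, then for every space Y with the Hurewicz property, the product X×Y has Menger's property. -/
open Set Filter Cardinal

/-! Auxiliary lemmas for the main theorem. -/

private def Vaux {X Y : Type} (U : ℕ → ℕ → Set (X × Y)) (n k : ℕ) : Set (X × Y) :=
  ⋃ m ∈ Set.Iic k, U n m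

private def Oaux {X Y : Type} [TopologicalSpace Y] (S : Set X)
    (U : ℕ → ℕ → Set (X × Y)) (n k : ℕ) : Set Y :=
  ⋃₀ {W | IsOpen W ∧ S ×ˢ W ⊆ Vaux U n k}

private lemma exists_bound_of_mono {Y : Type} (O : ℕ → Set Y) (mono : Monotone O)
    (ℱ : Set (Set Y)) (hfin : ℱ.Finite) (hsub : ℱ ⊆ Set.range O) :
    ∃ k, ⋃₀ ℱ ⊆ O k := by
  refine Set.Finite.induction_on
    (motive := fun ℱ _ => ℱ ⊆ Set.range O → ∃ k, ⋃₀ ℱ ⊆ O k) ℱ hfin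
    (fun _ => ⟨0, by simp⟩) ?_ hsub
  rintro F ℱ' - - ih hsub
  obtain ⟨k₁, hk₁⟩ := ih (fun G hG => hsub (Set.mem_insert_of_mem _ hG))
  obtain ⟨k₂, hk₂⟩ := hsub (Set.mem_insert F ℱ')
  refine ⟨max k₂ k₁, ?_⟩
  rw [Set.sUnion_insert]
  exact Set.union_subset (hk₂ ▸ mono (le_max_left _ _))
    (hk₁.trans (mono (le_max_right _ _)))

private lemma hurewicz_mono {Y : Type} [TopologicalSpace Y] (hY : IsHurewicz Y)
    (O : ℕ → ℕ → Set Y) (hOo : ∀ n k, IsOpen (O n k))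
    (hmono : ∀ n, Monotone (O n)) (hcov : ∀ n (y : Y), ∃ k, y ∈ O n k) :
    ∃ f : ℕ → ℕ, ∀ y : Y, ∀ᶠ n in atTop, y ∈ O n (f n) := by
  classical
  by_cases hA : ∀ n, ∃ k, O n k = Set.univ
  · choose k hk using hA
    exact ⟨k, fun y => Eventually.of_forall fun n => by rw [hk n]; trivial⟩
  · push_neg at hA
    obtain ⟨n₀, hn₀⟩ := hA
    have hgood : ∀ n k, O (if ∀ j, O n j ≠ Set.univ then n else n₀) k ≠ Set.univ := by
      intro n k
      by_cases h : ∀ j, O n j ≠ Set.univ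
      · rw [if_pos h]; exact h k
      · rw [if_neg h]; exact hn₀ k
    have hcover : ∀ n, IsCountableOpenCover
        (Set.range (O (if ∀ j, O n j ≠ Set.univ then n else n₀))) := by
      intro n
      refine ⟨Set.countable_range _, ?_, ?_, ?_⟩
      · rintro W ⟨k, rfl⟩; exact hOo _ _
      · rw [Set.sUnion_range]
        exact Set.eq_univ_iff_forall.mpr fun y => Set.mem_iUnion.mpr (hcov _ y)
      · rintro ⟨k, hk⟩; exact hgood n k hk
    have hnfs : ∀ n, ¬ ContainsFinSubcover
        (Set.range (O (if ∀ j, O n j ≠ Set.univ then n else n₀))) := by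
      rintro n ⟨ℱ, hsub, hfin, huniv⟩
      obtain ⟨k, hk⟩ := exists_bound_of_mono _ (hmono _) ℱ hfin hsub
      exact hgood n k (Set.univ_subset_iff.mp (huniv ▸ hk))
    obtain ⟨ℱ, hsub, hfin, hev⟩ := hY _ hcover hnfs
    have hsel : ∀ n, ∃ j, ⋃₀ ℱ n ⊆ O n j := by
      intro n
      by_cases h : ∀ j, O n j ≠ Set.univ
      · have hs' := hsub n
        rw [if_pos h] at hs'
        exact exists_bound_of_mono _ (hmono n) (ℱ n) (hfin n) hs'
      · push_neg at h
        obtain ⟨k, hk⟩ := h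
        exact ⟨k, by rw [hk]; exact Set.subset_univ _⟩
    choose f hf using hsel
    exact ⟨f, fun y => (hev y).mono fun n hn => hf n hn⟩

private lemma key_compact {X Y : Type} [TopologicalSpace X] [TopologicalSpace Y]
    (hY : IsHurewicz Y) (S : Set X) (hS : IsCompact S)
    (U : ℕ → ℕ → Set (X × Y)) (hUo : ∀ n m, IsOpen (U n m))
    (hUc : ∀ n, (⋃ m, U n m) = Set.univ) :
    ∃ f : ℕ → ℕ, ∀ x ∈ S, ∀ y : Y, ∀ᶠ n in atTop, ∃ m ≤ f n, (x, y) ∈ U n m := by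
  classical
  have hVo : ∀ n k, IsOpen (Vaux U n k) := fun n k => isOpen_biUnion fun m _ => hUo n m
  have hVmono : ∀ n, Monotone (Vaux U n) := fun n k k' hkk' =>
    Set.biUnion_subset_biUnion_left (Set.Iic_subset_Iic.mpr hkk')
  have hOo : ∀ n k, IsOpen (Oaux S U n k) := fun n k =>
    isOpen_sUnion fun W hW => hW.1
  have hOmono : ∀ n, Monotone (Oaux S U n) := fun n k k' hkk' =>
    Set.sUnion_subset_sUnion fun W hW => ⟨hW.1, hW.2.trans (hVmono n hkk')⟩
  have hcov : ∀ n (y : Y), ∃ k, y ∈ Oaux S U n k := by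
    intro n y
    have hcpt : IsCompact (S ×ˢ ({y} : Set Y)) := hS.prod isCompact_singleton
    have hsub : S ×ˢ ({y} : Set Y) ⊆ ⋃ m, U n m := by
      rw [hUc n]; exact Set.subset_univ _
    obtain ⟨t, ht⟩ := hcpt.elim_finite_subcover (U n) (hUo n) hsub
    refine ⟨t.sup id, ?_⟩
    have hsub2 : S ×ˢ ({y} : Set Y) ⊆ Vaux U n (t.sup id) := by
      refine ht.trans (Set.iUnion₂_subset fun m hm => ?_)
      exact Set.subset_biUnion_of_mem (Finset.le_sup (f := id) hm)
    obtain ⟨u, v, hu, hv, hSu, hyv, huv⟩ :=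
      generalized_tube_lemma hS isCompact_singleton (hVo n _) hsub2
    exact ⟨v, ⟨hv, (Set.prod_mono hSu (subset_refl v)).trans huv⟩, hyv rfl⟩
  obtain ⟨f, hf⟩ := hurewicz_mono hY (Oaux S U) hOo hOmono hcov
  refine ⟨f, fun x hx y => (hf y).mono fun n hn => ?_⟩
  obtain ⟨W, ⟨hWo, hWsub⟩, hyW⟩ := hn
  have hmem : (x, y) ∈ Vaux U n (f n) := hWsub ⟨hx, hyW⟩
  simpa [Vaux] using hmem

/-- Every space that is a union of fewer than `𝔡` compact subspaces belongs to
`Ufin(O,Γ) → Sfin(O,O)`: its product with every Hurewicz space is Menger. -/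
theorem KUnion_productive_Hurewicz_Menger (X : Type) (tX : TopologicalSpace X)
    (hX : @IsKUnion frakd X tX) :
    ProductiveClass HurewiczClass MengerClass X tX := by
  intro Y s hY
  letI := tX; letI := s
  show IsMenger (X × Y)
  intro 𝒰 h𝒰
  by_cases hne : Nonempty (X × Y)
  case neg =>
    haveI : IsEmpty (X × Y) := not_nonempty_iff.mp hne
    exact ⟨fun _ => ∅, fun n => Set.empty_subset _, fun n => Set.finite_empty,
      Set.eq_univ_iff_forall.mpr fun p => isEmptyElim p⟩
  case pos =>
    obtain ⟨p₀⟩ := hne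
    have hUne : ∀ n, (𝒰 n).Nonempty := by
      intro n
      have hp : p₀ ∈ ⋃₀ 𝒰 n := (h𝒰 n).2.2.1 ▸ Set.mem_univ p₀
      obtain ⟨V, hV, -⟩ := hp
      exact ⟨V, hV⟩
    have hEnum : ∀ n, ∃ U : ℕ → Set (X × Y), 𝒰 n = Set.range U :=
      fun n => ((h𝒰 n).1).exists_eq_range (hUne n)
    choose U hU using hEnum
    have hUo : ∀ n m, IsOpen (U n m) := fun n m =>
      (h𝒰 n).2.1 _ (by rw [hU n]; exact Set.mem_range_self m)
    have hUc : ∀ n, (⋃ m, U n m) = Set.univ := by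
      intro n
      rw [← Set.sUnion_range, ← hU n]
      exact (h𝒰 n).2.2.1
    obtain ⟨𝒮, h𝒮card, h𝒮cpt, h𝒮cov⟩ := hX
    have hfS : ∀ S : ↥𝒮, ∃ f : ℕ → ℕ, ∀ x ∈ (S : Set X), ∀ y : Y,
        ∀ᶠ n in atTop, ∃ m ≤ f n, (x, y) ∈ U n m :=
      fun S => key_compact hY S (h𝒮cpt S S.2) U hUo hUc
    choose F hF using hfS
    have hnd : ∃ g : ℕ → ℕ, ∀ S : ↥𝒮, ∃ᶠ n in atTop, F S n < g n := by
      by_contra hcon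
      push_neg at hcon
      have hdom : ∀ g : ℕ → ℕ, ∃ f ∈ Set.range F, ∀ᶠ n in atTop, g n ≤ f n := by
        intro g
        obtain ⟨S, hS⟩ := hcon g
        refine ⟨F S, Set.mem_range_self S, ?_⟩
        exact hS
      have hmem : frakd ≤ #(Set.range F) := csInf_le' ⟨Set.range F, rfl, hdom⟩
      exact (hmem.trans_lt (Cardinal.mk_range_le.trans_lt h𝒮card)).false
    obtain ⟨g, hg⟩ := hnd
    refine ⟨fun n => U n '' Set.Iic (g n), ?_, ?_, ?_⟩
    · intro n
      rw [hU n]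
      exact Set.image_subset_range _ _
    · intro n
      exact (Set.finite_Iic (g n)).image _
    · apply Set.eq_univ_iff_forall.mpr
      rintro ⟨x, y⟩
      have hx : x ∈ ⋃₀ 𝒮 := h𝒮cov ▸ Set.mem_univ x
      obtain ⟨S, hS, hxS⟩ := hx
      have hev := hF ⟨S, hS⟩ x hxS y
      obtain ⟨n, hlt, m, hm, hmem⟩ := ((hg ⟨S, hS⟩).and_eventually hev).exists
      exact Set.mem_iUnion.mpr ⟨n, ⟨U n m, ⟨m, hm.trans hlt.le, rfl⟩, hmem⟩⟩
end

section
/- For every infinite cardinal κ and every ordinal α, the class K_α(κ) is closed under products with compact regular spaces: if C ∈ K_α(κ) and Z is a compact regular space, then C×Z ∈ K_α(κ). -/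
open Set Filter Cardinal

private lemma KHier_zero' (κ : Cardinal) :
    KHier κ 0 = fun X t => @RegularSpace X t ∧ @IsKUnion κ X t :=
  Ordinal.limitRecOn_zero _ _ _

private lemma KHier_succ' (κ : Cardinal) (β : Ordinal) :
    KHier κ (Order.succ β) = KHierStep κ (KHier κ β) :=
  Ordinal.limitRecOn_succ _ _ _ _

private lemma KHier_limit' (κ : Cardinal) {o : Ordinal} (h : Order.IsSuccLimit o) :
    KHier κ o = fun X t => ∃ β, ∃ _ : β < o, KHier κ β X t :=
  Ordinal.limitRecOn_limit _ _ _ _ h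

private lemma closedEmbedding_restrictPreimage {X Y : Type} {tX : TopologicalSpace X}
    {tY : TopologicalSpace Y} {e : Y → X}
    (he : @Topology.IsClosedEmbedding Y X tY tX e) (S : Set X) :
    @Topology.IsClosedEmbedding _ _ (subspaceTop tY (e ⁻¹' S)) (subspaceTop tX S)
      (fun y => ⟨e y.1, y.2⟩) := by
  letI := tX; letI := tY
  constructor
  · refine Topology.IsEmbedding.of_comp ?_ (continuous_subtype_val) ?_
    · exact Continuous.subtype_mk (he.continuous.comp continuous_subtype_val) _
    · show Topology.IsEmbedding fun y : ↥(e ⁻¹' S) => e y.1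
      exact he.isEmbedding.comp Topology.IsEmbedding.subtypeVal
  · have hr : Set.range (fun y : ↥(e ⁻¹' S) => (⟨e y.1, y.2⟩ : ↥S))
        = Subtype.val ⁻¹' (Set.range e) := by
      ext ⟨x, hx⟩
      constructor
      · rintro ⟨y, hy⟩
        exact ⟨y.1, congrArg Subtype.val hy⟩
      · rintro ⟨y, hy⟩
        exact ⟨⟨y, by simpa [hy] using hx⟩, by simp [hy]⟩
    rw [hr]
    exact he.isClosed_range.preimage continuous_subtype_val
private lemma KHier_of_closedEmbedding (κ : Cardinal) (α : Ordinal) :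
    ∀ (X Y : Type) (tX : TopologicalSpace X) (tY : TopologicalSpace Y) (e : Y → X),
      @Topology.IsClosedEmbedding Y X tY tX e → KHier κ α X tX → KHier κ α Y tY := by
  induction α using Ordinal.induction with
  | _ α IH =>
  intro X Y tX tY e he hX
  letI := tX; letI := tY
  rcases Ordinal.zero_or_succ_or_isSuccLimit α with rfl | ⟨β, rfl⟩ | hlim
  · rw [KHier_zero'] at hX ⊢
    obtain ⟨hreg, 𝒮, hcard, hcomp, hcov⟩ := hX
    haveI := hreg
    refine ⟨he.isInducing.regularSpace, (e ⁻¹' ·) '' 𝒮,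
      lt_of_le_of_lt Cardinal.mk_image_le hcard, ?_, ?_⟩
    · rintro T ⟨S, hS, rfl⟩
      exact he.isInducing.isCompact_preimage he.isClosed_range (hcomp S hS)
    · rw [sUnion_image]
      apply eq_univ_of_forall
      intro y
      have : e y ∈ ⋃₀ 𝒮 := hcov ▸ mem_univ _
      obtain ⟨S, hS, hy⟩ := this
      exact mem_biUnion hS hy
  · rw [KHier_succ'] at hX ⊢
    obtain ⟨hreg, hcase⟩ := hX
    haveI := hreg
    have hβ : β < Order.succ β := Order.lt_succ β
    refine ⟨he.isInducing.regularSpace, ?_⟩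
    rcases hcase with ⟨D, ⟨f, hfc, rfl⟩, hD⟩ | ⟨𝒮, hcard, hcov, hmem⟩
    · left
      refine ⟨e ⁻¹' ⋃ n, f n, ⟨fun n => e ⁻¹' f n, fun n =>
        he.isInducing.isCompact_preimage he.isClosed_range (hfc n),
        by rw [preimage_iUnion]⟩, ?_⟩
      intro U hU hDU
      have hW : IsOpen ((e '' Uᶜ)ᶜ) := (he.isClosedMap _ hU.isClosed_compl).isOpen_compl
      have hDW : (⋃ n, f n) ⊆ (e '' Uᶜ)ᶜ := by
        intro x hx
        rintro ⟨y, hyU, rfl⟩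
        exact hyU (hDU hx)
      have hmem' := hD _ hW hDW
      rw [compl_compl] at hmem'
      have hUc : Uᶜ = e ⁻¹' (e '' Uᶜ) := (preimage_image_eq _ he.injective).symm
      show memSub (KHier κ β) tY Uᶜ
      rw [hUc]
      exact IH β hβ _ _ _ _ _ (closedEmbedding_restrictPreimage he (e '' Uᶜ)) hmem'
    · right
      refine ⟨(e ⁻¹' ·) '' 𝒮, lt_of_le_of_lt Cardinal.mk_image_le hcard, ?_, ?_⟩
      · rw [sUnion_image]
        apply eq_univ_of_forall
        intro y
        have : e y ∈ ⋃₀ 𝒮 := hcov ▸ mem_univ _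
        obtain ⟨S, hS, hy⟩ := this
        exact mem_biUnion hS hy
      · rintro T ⟨S, hS, rfl⟩
        exact IH β hβ _ _ _ _ _ (closedEmbedding_restrictPreimage he S) (hmem S hS)
  · rw [KHier_limit' κ hlim] at hX ⊢
    obtain ⟨β, hβ, hX⟩ := hX
    exact ⟨β, hβ, IH β hβ _ _ _ _ _ he hX⟩
/-- For every infinite cardinal `κ` and every ordinal `α`, the class `K_α(κ)` is closed
under products with compact regular spaces. -/
theorem KHier_closed_under_compact_products (kappa : Cardinal)
    (hkappa : Cardinal.aleph0 ≤ kappa) (α : Ordinal)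
    (C Z : Type) (tC : TopologicalSpace C) (tZ : TopologicalSpace Z)
    (hC : KHier kappa α C tC) (hZc : @CompactSpace Z tZ) (hZr : @RegularSpace Z tZ) :
    KHier kappa α (C × Z) (prodTop tC tZ) := by
  revert C Z tC tZ hC hZc hZr
  induction α using Ordinal.induction with
  | _ α IH =>
  intro C Z tC tZ hC hZc hZr
  letI := tC; letI := tZ
  haveI := hZc; haveI := hZr
  rcases Ordinal.zero_or_succ_or_isSuccLimit α with rfl | ⟨β, rfl⟩ | hlim
  · rw [KHier_zero'] at hC ⊢
    obtain ⟨hreg, 𝒮, hcard, hcomp, hcov⟩ := hC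
    haveI := hreg
    refine ⟨by show RegularSpace (C × Z); infer_instance,
      (· ×ˢ (univ : Set Z)) '' 𝒮, lt_of_le_of_lt Cardinal.mk_image_le hcard, ?_, ?_⟩
    · rintro T ⟨S, hS, rfl⟩
      exact (hcomp S hS).prod isCompact_univ
    · rw [sUnion_image]
      apply eq_univ_of_forall
      intro p
      have : p.1 ∈ ⋃₀ 𝒮 := hcov ▸ mem_univ _
      obtain ⟨S, hS, h⟩ := this
      exact mem_biUnion hS (mk_mem_prod h (mem_univ p.2))
  · rw [KHier_succ'] at hC ⊢
    obtain ⟨hreg, hcase⟩ := hC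
    haveI := hreg
    have hβ : β < Order.succ β := Order.lt_succ β
    refine ⟨by show RegularSpace (C × Z); infer_instance, ?_⟩
    rcases hcase with ⟨D, ⟨f, hfc, rfl⟩, hD⟩ | ⟨𝒮, hcard, hcov, hmem⟩
    · left
      refine ⟨(⋃ n, f n) ×ˢ (univ : Set Z), ⟨fun n => f n ×ˢ (univ : Set Z),
        fun n => (hfc n).prod isCompact_univ, iUnion_prod_const⟩, ?_⟩
      intro U hU hDU
      have hVopen : IsOpen {c : C | ∀ z : Z, (c, z) ∈ U} := by
        rw [isOpen_iff_forall_mem_open]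
        intro c hc
        obtain ⟨u, v, hu, hv, hcu, hvv, huv⟩ :=
          generalized_tube_lemma isCompact_singleton isCompact_univ hU
            (fun p hp => by
              rcases p with ⟨a, b⟩
              rcases hp with ⟨ha, -⟩
              rw [mem_singleton_iff] at ha
              subst ha
              exact hc b)
        exact ⟨u, fun c' hc' z => huv (mk_mem_prod hc' (hvv (mem_univ z))), hu, hcu rfl⟩
      have hDV : (⋃ n, f n) ⊆ {c : C | ∀ z : Z, (c, z) ∈ U} :=
        fun c hc z => hDU (mk_mem_prod hc (mem_univ z))
      have hVc := hD _ hVopen hDV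
      have hprod := IH β hβ ↥({c : C | ∀ z : Z, (c, z) ∈ U}ᶜ) Z
        (subspaceTop tC _) tZ hVc hZc hZr
      set V := {c : C | ∀ z : Z, (c, z) ∈ U} with hVdef
      have hp2 : ∀ p : ↥Uᶜ, p.1.1 ∈ Vᶜ := fun p h => p.2 (h p.1.2)
      set g : ↥Uᶜ → ↥(Vᶜ) × Z := fun p => (⟨p.1.1, hp2 p⟩, p.1.2) with hgdef
      set m : ↥(Vᶜ) × Z → C × Z := fun q => (q.1.1, q.2) with hmdef
      have hmc : Continuous m := (continuous_subtype_val.comp continuous_fst).prodMk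
        continuous_snd
      have hgc : Continuous g :=
        (Continuous.subtype_mk ((continuous_fst.comp continuous_subtype_val)) _).prodMk
          (continuous_snd.comp continuous_subtype_val)
      have hge : Topology.IsEmbedding g := by
        refine Topology.IsEmbedding.of_comp hgc hmc ?_
        have : m ∘ g = Subtype.val := rfl
        rw [this]
        exact Topology.IsEmbedding.subtypeVal
      have hgr : IsClosed (range g) := by
        have : range g = m ⁻¹' Uᶜ := by
          ext q
          constructor
          · rintro ⟨p, rfl⟩
            exact p.2
          · intro hq
            exact ⟨⟨(q.1.1, q.2), hq⟩, rfl⟩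
        rw [this]
        exact hU.isClosed_compl.preimage hmc
      exact KHier_of_closedEmbedding kappa β _ _ _ _ g ⟨hge, hgr⟩ hprod
    · right
      refine ⟨(· ×ˢ (univ : Set Z)) '' 𝒮, lt_of_le_of_lt Cardinal.mk_image_le hcard,
        ?_, ?_⟩
      · rw [sUnion_image]
        apply eq_univ_of_forall
        intro p
        have : p.1 ∈ ⋃₀ 𝒮 := hcov ▸ mem_univ _
        obtain ⟨S, hS, h⟩ := this
        exact mem_biUnion hS (mk_mem_prod h (mem_univ p.2))
      · rintro T ⟨S, hS, rfl⟩
        have hprod := IH β hβ ↥S Z (subspaceTop tC S) tZ (hmem S hS) hZc hZr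
        set g : ↥(S ×ˢ (univ : Set Z)) → ↥S × Z :=
          fun p => (⟨p.1.1, p.2.1⟩, p.1.2) with hgdef
        set m : ↥S × Z → C × Z := fun q => (q.1.1, q.2) with hmdef
        have hmc : Continuous m := (continuous_subtype_val.comp continuous_fst).prodMk
          continuous_snd
        have hgc : Continuous g :=
          (Continuous.subtype_mk ((continuous_fst.comp continuous_subtype_val)) _).prodMk
            (continuous_snd.comp continuous_subtype_val)
        have hge : Topology.IsEmbedding g := by
          refine Topology.IsEmbedding.of_comp hgc hmc ?_
          have : m ∘ g = Subtype.val := rfl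
          rw [this]
          exact Topology.IsEmbedding.subtypeVal
        have hgr : IsClosed (range g) := by
          have : range g = Set.univ := range_eq_univ.mpr
            (fun q => ⟨⟨(q.1.1, q.2), ⟨q.1.2, mem_univ _⟩⟩, rfl⟩)
          rw [this]
          exact isClosed_univ
        exact KHier_of_closedEmbedding kappa β _ _ _ _ g ⟨hge, hgr⟩ hprod
  · rw [KHier_limit' kappa hlim] at hC ⊢
    obtain ⟨β, hβ, hC⟩ := hC
    exact ⟨β, hβ, IH β hβ C Z tC tZ hC hZc hZr⟩
end
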